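/- Let K, R ≥ 0 and let p, q : [1,∞) → ℝ be continuous with |p(s)| ≤ K s⁻² and |q(s)| ≤ K R s⁻² for all s ≥ 1. Let ẏ : [1,∞) → ℝ be differentiable with ẏ(1) = 0 and ẏ'(s) = p(s)·ẏ(s) + q(s) for all s ≥ 1. Then |ẏ(s)| ≤ e^K · K R · (1 − 1/s) for all s ≥ 1, and ẏ(s) converges to a finite limit as s → ∞. -/

import Mathlib

open Filter

open MeasureTheory intervalIntegral Set in
/-- ODE content of Lemma 4.10: the first variation of the luminosity
reparametrization is bounded and converges at infinity. -/
theorem penrose_luminosity_variation (K R : ℝ) (hK : 0 ≤ K) (hR : 0 ≤ R)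
    (p q : ℝ → ℝ)
    (hp_cont : ContinuousOn p (Set.Ici 1)) (hq_cont : ContinuousOn q (Set.Ici 1))
    (hp : ∀ s ≥ (1:ℝ), |p s| ≤ K * (s ^ 2)⁻¹)
    (hq : ∀ s ≥ (1:ℝ), |q s| ≤ K * R * (s ^ 2)⁻¹)
    (y : ℝ → ℝ) (hy1 : y 1 = 0)
    (hy : ∀ s ≥ (1:ℝ), HasDerivAt y (p s * y s + q s) s) :
    (∀ s ≥ (1:ℝ), |y s| ≤ Real.exp K * (K * R) * (1 - 1 / s)) ∧
    ∃ L : ℝ, Tendsto y atTop (nhds L) := by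
  -- modified coefficients, continuous on all of ℝ
  set p' : ℝ → ℝ := fun u => p (max u 1) with hp'def
  set q' : ℝ → ℝ := fun u => q (max u 1) with hq'def
  have hmaxmem : ∀ u : ℝ, max u 1 ∈ Set.Ici (1:ℝ) := fun u => le_max_right u 1
  have hp'c : Continuous p' :=
    hp_cont.comp_continuous (continuous_id.max continuous_const) hmaxmem
  have hq'c : Continuous q' :=
    hq_cont.comp_continuous (continuous_id.max continuous_const) hmaxmem
  have hp'eq : ∀ u : ℝ, 1 ≤ u → p' u = p u := fun u hu => by
    simp [hp'def, max_eq_left hu]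
  have hq'eq : ∀ u : ℝ, 1 ≤ u → q' u = q u := fun u hu => by
    simp [hq'def, max_eq_left hu]
  have hp'bd : ∀ u : ℝ, 1 ≤ u → |p' u| ≤ K * (u ^ 2)⁻¹ := fun u hu => by
    rw [hp'eq u hu]; exact hp u hu
  have hq'bd : ∀ u : ℝ, 1 ≤ u → |q' u| ≤ K * R * (u ^ 2)⁻¹ := fun u hu => by
    rw [hq'eq u hu]; exact hq u hu
  -- the integrating factor exponent
  set P : ℝ → ℝ := fun t => ∫ v in (1:ℝ)..t, p' v with hPdef
  have hPderiv : ∀ t : ℝ, HasDerivAt P (p' t) t := fun t =>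
    integral_hasDerivAt_right (hp'c.intervalIntegrable 1 t)
      (hp'c.stronglyMeasurableAtFilter _ _) hp'c.continuousAt
  have hPcont : Continuous P := by
    rw [continuous_iff_continuousAt]
    exact fun t => (hPderiv t).continuousAt
  -- ∫ v in u..s, (v^2)⁻¹ = u⁻¹ - s⁻¹ for 1 ≤ u ≤ s
  have hinvsq_cont : ∀ u s : ℝ, 1 ≤ u → u ≤ s →
      ContinuousOn (fun v : ℝ => (v ^ 2)⁻¹) (Icc u s) := by
    intro u s hu hus
    refine ((continuous_pow 2).continuousOn).inv₀ fun v hv => ?_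
    have : (0:ℝ) < v := lt_of_lt_of_le zero_lt_one (le_trans hu hv.1)
    positivity
  have hIntInv : ∀ u s : ℝ, 1 ≤ u → u ≤ s →
      (∫ v in u..s, (v ^ 2)⁻¹) = u⁻¹ - s⁻¹ := by
    intro u s hu hus
    have hderiv : ∀ v ∈ uIcc u s, HasDerivAt (fun x : ℝ => -x⁻¹) ((v ^ 2)⁻¹) v := by
      intro v hv
      rw [uIcc_of_le hus] at hv
      have hv0 : v ≠ 0 := by
        have : (0:ℝ) < v := lt_of_lt_of_le zero_lt_one (le_trans hu hv.1)
        exact ne_of_gt this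
      have hd := (hasDerivAt_inv hv0).neg
      rw [neg_neg] at hd
      exact hd
    have hint : IntervalIntegrable (fun v : ℝ => (v ^ 2)⁻¹) volume u s := by
      rw [intervalIntegrable_iff_integrableOn_Icc_of_le hus]
      exact (hinvsq_cont u s hu hus).integrableOn_compact isCompact_Icc
    have := integral_eq_sub_of_hasDerivAt hderiv hint
    rw [this]; ring
  -- key estimate on increments of P
  have hPincr : ∀ u s : ℝ, 1 ≤ u → u ≤ s → |P s - P u| ≤ K * (u⁻¹ - s⁻¹) := by
    intro u s hu hus
    have hI1 : IntervalIntegrable p' volume 1 s := hp'c.intervalIntegrable 1 s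
    have hI2 : IntervalIntegrable p' volume 1 u := hp'c.intervalIntegrable 1 u
    have hsub : P s - P u = ∫ v in u..s, p' v :=
      integral_interval_sub_left hI1 hI2
    rw [hsub]
    calc |∫ v in u..s, p' v| ≤ ∫ v in u..s, |p' v| :=
          abs_integral_le_integral_abs hus
      _ ≤ ∫ v in u..s, K * (v ^ 2)⁻¹ := by
          refine integral_mono_on hus (hp'c.abs.intervalIntegrable u s) ?_ ?_
          · rw [intervalIntegrable_iff_integrableOn_Icc_of_le hus]
            exact (((hinvsq_cont u s hu hus).const_smul K).congr
              (fun x _ => by simp [smul_eq_mul])).integrableOn_compact isCompact_Icc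
          · exact fun v hv => hp'bd v (le_trans hu hv.1)
      _ = K * (u⁻¹ - s⁻¹) := by
          rw [intervalIntegral.integral_const_mul, hIntInv u s hu hus]
  have hPK : ∀ u s : ℝ, 1 ≤ u → u ≤ s → P s - P u ≤ K := by
    intro u s hu hus
    have h1 := (abs_le.1 (hPincr u s hu hus)).2
    have hu' : u⁻¹ ≤ 1 := inv_le_one_of_one_le₀ hu
    have hs' : (0:ℝ) ≤ s⁻¹ := inv_nonneg.2 (le_trans zero_le_one (le_trans hu hus))
    nlinarith
  have hP1 : P 1 = 0 := by simp [hPdef]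
  have hPnegK : ∀ u : ℝ, 1 ≤ u → -P u ≤ K := by
    intro u hu
    have h0 := hPincr 1 u le_rfl hu
    rw [hP1] at h0
    have h1 := (neg_le_abs (P u - 0)).trans h0
    have hu' : (0:ℝ) ≤ u⁻¹ := inv_nonneg.2 (le_trans zero_le_one hu)
    nlinarith
  -- the function g = y * exp(-P) has derivative q' * exp(-P) on [1, ∞)
  set g : ℝ → ℝ := fun t => y t * Real.exp (-P t) with hgdef
  have hgderiv : ∀ x : ℝ, 1 ≤ x → HasDerivAt g (q' x * Real.exp (-P x)) x := by
    intro x hx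
    have h1 := (hy x hx).mul ((hPderiv x).neg.exp)
    refine HasDerivAt.congr_deriv h1 ?_
    rw [hp'eq x hx, hq'eq x hx]
    simp only [Pi.neg_apply]
    ring
  set h : ℝ → ℝ := fun u => q' u * Real.exp (-P u) with hhdef
  have hhc : Continuous h := hq'c.mul (hPcont.neg.rexp)
  -- explicit formula for y
  have hform : ∀ s : ℝ, 1 ≤ s → y s = Real.exp (P s) * ∫ u in (1:ℝ)..s, h u := by
    intro s hs
    have hmem : ∀ x ∈ uIcc (1:ℝ) s, HasDerivAt g (h x) x := by
      intro x hx
      rw [uIcc_of_le hs] at hx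
      exact hgderiv x hx.1
    have hsub := integral_eq_sub_of_hasDerivAt hmem (hhc.intervalIntegrable 1 s)
    rw [hsub, hgdef]
    simp only [hy1]
    rw [zero_mul, sub_zero, ← mul_assoc, mul_comm (Real.exp (P s)),
      mul_assoc, ← Real.exp_add]
    simp
  constructor
  · -- the bound
    intro s hs
    have hconst : ∀ u ∈ Icc (1:ℝ) s,
        |Real.exp (P s) * h u| ≤ Real.exp K * (K * R) * (u ^ 2)⁻¹ := by
      intro u hu
      have hu1 : (1:ℝ) ≤ u := hu.1
      have hus : u ≤ s := hu.2
      rw [hhdef]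
      have habs : |Real.exp (P s) * (q' u * Real.exp (-P u))|
          = Real.exp (P s - P u) * |q' u| := by
        rw [abs_mul, abs_mul, Real.abs_exp, Real.abs_exp, Real.exp_sub]
        rw [Real.exp_neg]
        ring
      rw [habs]
      have h1 : Real.exp (P s - P u) ≤ Real.exp K :=
        Real.exp_le_exp.2 (hPK u s hu1 hus)
      have h2 : |q' u| ≤ K * R * (u ^ 2)⁻¹ := hq'bd u hu1
      have h3 : (0:ℝ) ≤ Real.exp (P s - P u) := le_of_lt (Real.exp_pos _)
      calc Real.exp (P s - P u) * |q' u| ≤ Real.exp K * (K * R * (u ^ 2)⁻¹) :=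
            mul_le_mul h1 h2 (abs_nonneg _) (le_of_lt (Real.exp_pos _))
        _ = Real.exp K * (K * R) * (u ^ 2)⁻¹ := by ring
    have hint1 : IntervalIntegrable (fun u => Real.exp (P s) * h u) volume 1 s :=
      (continuous_const.mul hhc).intervalIntegrable 1 s
    have hint2 : IntervalIntegrable (fun u : ℝ => Real.exp K * (K * R) * (u ^ 2)⁻¹)
        volume 1 s := by
      rw [intervalIntegrable_iff_integrableOn_Icc_of_le hs]
      exact (((hinvsq_cont 1 s le_rfl hs).const_smul (Real.exp K * (K * R))).congr
        (fun x _ => by simp [smul_eq_mul])).integrableOn_compact isCompact_Icc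
    calc |y s| = |∫ u in (1:ℝ)..s, Real.exp (P s) * h u| := by
          rw [hform s hs, ← intervalIntegral.integral_const_mul]
      _ ≤ ∫ u in (1:ℝ)..s, |Real.exp (P s) * h u| := abs_integral_le_integral_abs hs
      _ ≤ ∫ u in (1:ℝ)..s, Real.exp K * (K * R) * (u ^ 2)⁻¹ := by
          refine integral_mono_on hs (hint1.abs) hint2 hconst
      _ = Real.exp K * (K * R) * (1 - 1 / s) := by
          rw [intervalIntegral.integral_const_mul, hIntInv 1 s le_rfl hs]
          norm_num
  · -- convergence
    have hinvsq_int : IntegrableOn (fun u : ℝ => (u ^ 2)⁻¹) (Ioi (1:ℝ)) := by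
      have := integrableOn_Ioi_rpow_of_lt (by norm_num : (-2:ℝ) < -1) (zero_lt_one)
      refine this.congr_fun (fun x hx => ?_) measurableSet_Ioi
      have hx0 : (0:ℝ) < x := lt_trans zero_lt_one hx
      show x ^ (-2:ℝ) = (x ^ 2)⁻¹
      rw [Real.rpow_neg hx0.le]
      norm_num
    have hbound_int : ∀ C : ℝ, IntegrableOn (fun u : ℝ => C * (u ^ 2)⁻¹) (Ioi (1:ℝ)) :=
      fun C => hinvsq_int.const_mul C
    have hPint : IntegrableOn p' (Ioi (1:ℝ)) := by
      refine Integrable.mono' (hbound_int K) hp'c.aestronglyMeasurable.restrict ?_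
      refine (ae_restrict_iff' measurableSet_Ioi).2 (ae_of_all _ fun u hu => ?_)
      rw [Real.norm_eq_abs]
      exact hp'bd u (le_of_lt hu)
    have hhint : IntegrableOn h (Ioi (1:ℝ)) := by
      refine Integrable.mono' (hbound_int (Real.exp K * (K * R)))
        hhc.aestronglyMeasurable.restrict ?_
      refine (ae_restrict_iff' measurableSet_Ioi).2 (ae_of_all _ fun u hu => ?_)
      have hu1 : (1:ℝ) ≤ u := le_of_lt hu
      rw [Real.norm_eq_abs, hhdef, abs_mul, Real.abs_exp]
      have h1 : Real.exp (-P u) ≤ Real.exp K := Real.exp_le_exp.2 (hPnegK u hu1)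
      have h2 : |q' u| ≤ K * R * (u ^ 2)⁻¹ := hq'bd u hu1
      calc |q' u| * Real.exp (-P u) ≤ (K * R * (u ^ 2)⁻¹) * Real.exp K :=
            mul_le_mul h2 h1 (le_of_lt (Real.exp_pos _)) (by positivity)
        _ = Real.exp K * (K * R) * (u ^ 2)⁻¹ := by ring
    have hPlim : Tendsto P atTop (nhds (∫ u in Ioi (1:ℝ), p' u)) :=
      intervalIntegral_tendsto_integral_Ioi 1 hPint tendsto_id
    have hIlim : Tendsto (fun s => ∫ u in (1:ℝ)..s, h u) atTop
        (nhds (∫ u in Ioi (1:ℝ), h u)) :=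
      intervalIntegral_tendsto_integral_Ioi 1 hhint tendsto_id
    refine ⟨Real.exp (∫ u in Ioi (1:ℝ), p' u) * ∫ u in Ioi (1:ℝ), h u, ?_⟩
    have : Tendsto (fun s => Real.exp (P s) * ∫ u in (1:ℝ)..s, h u) atTop
        (nhds (Real.exp (∫ u in Ioi (1:ℝ), p' u) * ∫ u in Ioi (1:ℝ), h u)) :=
      ((Real.continuous_exp.tendsto _).comp hPlim).mul hIlim
    refine this.congr' ?_
    filter_upwards [eventually_ge_atTop (1:ℝ)] with s hs
    exact (hform s hs).symm
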